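/- Azuma-type bound for bounded submartingales: suppose 0 < η ≤ N/10, m ≥ 1 is an integer, a > 0, and A_0, A_1, …, A_m is an (η,N)-bounded submartingale, meaning E(A_{i+1} | F_i) ≥ A_i and A_i − η ≤ A_{i+1} ≤ A_i + N almost surely for all i. Then P(A_m ≤ A_0 − a) ≤ exp(−a²/(3ηmN)). -/

import Mathlib

open MeasureTheory


lemma aux_exp_neg_le {u : ℝ} (hu : 0 ≤ u) (hu' : u ≤ 1) :
    Real.exp (-u) ≤ 1 - u + u ^ 2 / 2 + 2 * u ^ 3 / 9 := by
  have hb := Real.exp_bound (x := -u) (by rwa [abs_neg, abs_of_nonneg hu]) (n := 3) (by norm_num)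
  rw [abs_neg, abs_of_nonneg hu] at hb
  simp [Finset.sum_range_succ, Nat.factorial] at hb
  norm_num at hb
  have h1 := (abs_sub_le_iff.1 hb).1
  nlinarith [pow_nonneg hu 3]

lemma aux_exp_le {x : ℝ} (hx : 0 ≤ x) (hx' : x ≤ 1) :
    Real.exp x ≤ 1 + x + x ^ 2 / 2 + 2 * x ^ 3 / 9 := by
  have hb := Real.exp_bound' hx hx' (n := 3) (by norm_num)
  simp [Finset.sum_range_succ, Nat.factorial] at hb
  norm_num at hb
  nlinarith [pow_nonneg hx 3]

lemma aux_analytic {η N t : ℝ} (hη : 0 < η) (hηN : η ≤ N / 10) (ht : 0 ≤ t)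
    (htN : t * N ≤ 2 / 3) :
    (η * Real.exp (-(t * N)) + N * Real.exp (t * η)) / (η + N)
      ≤ Real.exp (3 * η * N * t ^ 2 / 4) := by
  have hN : 0 < N := by linarith
  have htN0 : 0 ≤ t * N := by positivity
  have htη0 : 0 ≤ t * η := by positivity
  have htη : t * η ≤ 1 / 15 := by nlinarith
  have h1 := aux_exp_neg_le htN0 (by linarith)
  have h2 := aux_exp_le htη0 (by linarith)
  have h3 : 1 + 3 * η * N * t ^ 2 / 4 ≤ Real.exp (3 * η * N * t ^ 2 / 4) := by
    linarith [Real.add_one_le_exp (3 * η * N * t ^ 2 / 4)]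
  rw [div_le_iff₀ (by linarith : (0:ℝ) < η + N)]
  have h4 : 2 * t * N ^ 2 / 9 ≤ N / 4 := by nlinarith
  have h5 : 2 * t * η ^ 2 / 9 ≤ η / 4 := by nlinarith
  have hS : N / 2 + 2 * t * N ^ 2 / 9 + η / 2 + 2 * t * η ^ 2 / 9 ≤ 3 * (η + N) / 4 := by
    linarith
  have hS' := mul_le_mul_of_nonneg_left hS (by positivity : (0:ℝ) ≤ η * N * t ^ 2)
  nlinarith [mul_le_mul_of_nonneg_left h1 hη.le, mul_le_mul_of_nonneg_left h2 hN.le,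
    mul_le_mul_of_nonneg_left h3 (by linarith : (0:ℝ) ≤ η + N)]

/-- Azuma-type bound for `(η,N)`-bounded submartingales. -/
theorem stmt_15 {Ω : Type*} {m0 : MeasurableSpace Ω} (μ : Measure Ω)
    [IsProbabilityMeasure μ] (ℱ : Filtration ℕ m0)
    (A : ℕ → Ω → ℝ) (m : ℕ) (hm : 1 ≤ m) (η N a : ℝ)
    (hη : 0 < η) (hηN : η ≤ N / 10) (ha : 0 < a)
    (hadapted : Adapted ℱ A)
    (hint : ∀ i, Integrable (A i) μ)
    (hbdd : ∀ i < m, ∀ᵐ ω ∂μ, A i ω - η ≤ A (i + 1) ω ∧ A (i + 1) ω ≤ A i ω + N)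
    (hsub : ∀ i < m, A i ≤ᵐ[μ] μ[A (i + 1) | ℱ i]) :
    (μ {ω | A m ω ≤ A 0 ω - a}).toReal ≤ Real.exp (-a ^ 2 / (3 * η * m * N)) := by
  have hN : 0 < N := by linarith
  have hm' : (0:ℝ) < m := by exact_mod_cast hm
  -- a.e. statement of bounded increments
  have hae : ∀ᵐ ω ∂μ, ∀ i, i < m → A i ω - η ≤ A (i + 1) ω ∧ A (i + 1) ω ≤ A i ω + N := by
    rw [ae_all_iff]
    intro i
    by_cases hi : i < m
    · filter_upwards [hbdd i hi] with ω h _; exact h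
    · filter_upwards with ω h; exact absurd h hi
  have hstep : ∀ᵐ ω ∂μ, ∀ i, i ≤ m → A 0 ω - A i ω ≤ i * η := by
    filter_upwards [hae] with ω hω
    intro i
    induction i with
    | zero => simp
    | succ n ih =>
      intro hn1
      have hn : n < m := hn1
      have h1 := (hω n hn).1
      have h2 := ih hn.le
      push_cast
      linarith
  rcases lt_or_ge (m * η) a with hcase | hcase
  · -- event is null
    have hnull : μ {ω | A m ω ≤ A 0 ω - a} = 0 := by
      rw [measure_eq_zero_iff_ae_notMem]
      filter_upwards [hstep] with ω hω
      simp only [Set.mem_setOf_eq, not_le]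
      have := hω m le_rfl
      linarith
    rw [hnull]
    simp [Real.exp_nonneg]
  · -- Chernoff argument
    set t : ℝ := 2 * a / (3 * m * η * N) with ht_def
    have ht : 0 < t := by positivity
    have htN : t * N ≤ 2 / 3 := by
      rw [ht_def]
      rw [div_mul_eq_mul_div, div_le_iff₀ (by positivity)]
      nlinarith
    set α : ℝ := (η * Real.exp (-(t * N)) + N * Real.exp (t * η)) / (η + N) with hα_def
    set β : ℝ := (Real.exp (t * η) - Real.exp (-(t * N))) / (η + N) with hβ_def
    have hηN' : (0:ℝ) < η + N := by linarith
    have hβ : 0 ≤ β := by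
      apply div_nonneg _ hηN'.le
      have : -(t * N) ≤ t * η := by nlinarith
      linarith [Real.exp_le_exp.2 this]
    have hα0 : 0 < α := by positivity
    have hαle : α ≤ Real.exp (3 * η * N * t ^ 2 / 4) := aux_analytic hη hηN ht.le htN
    -- convexity bound
    have hconvex : ∀ x : ℝ, -N ≤ x → x ≤ η → Real.exp (t * x) ≤ α + β * x := by
      intro x hx1 hx2
      have hl1 : 0 ≤ (η - x) / (η + N) := div_nonneg (by linarith) hηN'.le
      have hl2 : 0 ≤ (x + N) / (η + N) := div_nonneg (by linarith) hηN'.le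
      have hsum : (η - x) / (η + N) + (x + N) / (η + N) = 1 := by field_simp; ring
      have h := convexOn_exp.2 (Set.mem_univ (-(t * N))) (Set.mem_univ (t * η)) hl1 hl2 hsum
      simp only [smul_eq_mul] at h
      have harg : (η - x) / (η + N) * -(t * N) + (x + N) / (η + N) * (t * η) = t * x := by
        field_simp; ring
      rw [harg] at h
      refine h.trans (le_of_eq ?_)
      rw [hα_def, hβ_def]
      field_simp
      ring
    -- the exponential process
    set Y : ℕ → Ω → ℝ := fun i ω => Real.exp (t * (A 0 ω - A i ω)) with hY_def
    have hAm : ∀ i, StronglyMeasurable (A i) := fun i => ((hadapted i).mono (ℱ.le i) le_rfl).stronglyMeasurable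
    have hYmeas : ∀ i, StronglyMeasurable (Y i) := fun i =>
      Real.continuous_exp.comp_stronglyMeasurable (((hAm 0).sub (hAm i)).const_mul t)
    have intY : ∀ i, i ≤ m → Integrable (Y i) μ := by
      intro i hi
      refine Integrable.mono' (integrable_const (Real.exp (t * (i * η))))
        (hYmeas i).aestronglyMeasurable ?_
      filter_upwards [hstep] with ω hω
      rw [Real.norm_eq_abs, abs_of_pos (Real.exp_pos _)]
      exact Real.exp_le_exp.2 (mul_le_mul_of_nonneg_left (hω i hi) ht.le)
    -- induction: ∫ Y i ≤ α ^ i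
    have key : ∀ i, i ≤ m → ∫ ω, Y i ω ∂μ ≤ α ^ i := by
      intro i hi
      induction i with
      | zero =>
        simp only [hY_def, sub_self, mul_zero, Real.exp_zero, pow_zero]
        simp
      | succ n ih =>
        have hn : n < m := hi
        set Z : Ω → ℝ := fun ω => Real.exp (t * (A n ω - A (n + 1) ω)) with hZ_def
        have hZmeas : StronglyMeasurable Z :=
          Real.continuous_exp.comp_stronglyMeasurable (((hAm n).sub (hAm (n + 1))).const_mul t)
        have intZ : Integrable Z μ := by
          refine Integrable.mono' (integrable_const (Real.exp (t * η)))
            hZmeas.aestronglyMeasurable ?_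
          filter_upwards [hbdd n hn] with ω hω
          rw [Real.norm_eq_abs, abs_of_pos (Real.exp_pos _)]
          exact Real.exp_le_exp.2 (by nlinarith [hω.1])
        have hYZ : Y n * Z = Y (n + 1) := by
          funext ω
          simp only [Pi.mul_apply, hY_def, hZ_def, ← Real.exp_add]
          congr 1; ring
        have intYZ : Integrable (Y n * Z) μ := by rw [hYZ]; exact intY (n + 1) hi
        have hYF : StronglyMeasurable[ℱ n] (Y n) :=
          Real.continuous_exp.comp_stronglyMeasurable
            ((((hadapted 0).mono (ℱ.mono (Nat.zero_le n)) le_rfl).stronglyMeasurable.sub (hadapted n).stronglyMeasurable).const_mul t)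
        have hpull : μ[Y n * Z|ℱ n] =ᵐ[μ] Y n * μ[Z|ℱ n] :=
          condExp_mul_of_stronglyMeasurable_left hYF intYZ intZ
        -- conditional bound on Z
        set g : Ω → ℝ := A n - A (n + 1) with hg_def
        have intg : Integrable g μ := (hint n).sub (hint (n + 1))
        have intLf : Integrable ((fun _ => α) + β • g) μ :=
          (integrable_const α).add (intg.smul β)
        have hZle : Z ≤ᵐ[μ] (fun _ => α) + β • g := by
          filter_upwards [hbdd n hn] with ω hω
          simp only [Pi.add_apply, Pi.smul_apply, hg_def, Pi.sub_apply, smul_eq_mul]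
          exact hconvex _ (by linarith [hω.2]) (by linarith [hω.1])
        have h2 := condExp_mono (m := ℱ n) intZ intLf hZle
        have e1 := condExp_add (μ := μ) (m := ℱ n) (integrable_const α) (intg.smul β)
        have e2 : (μ[(fun _ => α : Ω → ℝ)|ℱ n]) = fun _ => α := condExp_const (ℱ.le n) α
        have e3 := condExp_smul (μ := μ) (m := ℱ n) β g
        have e4 := condExp_sub (μ := μ) (m := ℱ n) (hint n) (hint (n + 1))
        have e5 : μ[A n|ℱ n] = A n :=
          condExp_of_stronglyMeasurable (ℱ.le n) (hadapted n).stronglyMeasurable (hint n)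
        have hcond : μ[Z|ℱ n] ≤ᵐ[μ] fun _ => α := by
          filter_upwards [h2, e1, e3, e4, hsub n hn] with ω h2ω e1ω e3ω e4ω hsω
          simp only [Pi.add_apply, Pi.smul_apply, Pi.sub_apply, smul_eq_mul, e2, e5] at e1ω e3ω e4ω
          rw [hg_def] at e3ω
          nlinarith [mul_nonneg hβ (sub_nonneg.2 hsω)]
        have intLHS : Integrable (Y n * μ[Z|ℱ n]) μ := integrable_condExp.congr hpull
        calc ∫ ω, Y (n + 1) ω ∂μ = ∫ ω, (Y n * Z) ω ∂μ := by rw [hYZ]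
          _ = ∫ ω, (μ[Y n * Z|ℱ n]) ω ∂μ := (integral_condExp (ℱ.le n)).symm
          _ = ∫ ω, (Y n * μ[Z|ℱ n]) ω ∂μ := integral_congr_ae hpull
          _ ≤ ∫ ω, α * Y n ω ∂μ := by
              refine integral_mono_ae intLHS ((intY n hn.le).const_mul α) ?_
              filter_upwards [hcond] with ω hc
              simp only [Pi.mul_apply]
              nlinarith [Real.exp_nonneg (t * (A 0 ω - A n ω)), hc]
          _ = α * ∫ ω, Y n ω ∂μ := integral_const_mul α _
          _ ≤ α * α ^ n := mul_le_mul_of_nonneg_left (ih hn.le) hα0.le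
          _ = α ^ (n + 1) := by ring
    -- Markov
    have hsubset : {ω | A m ω ≤ A 0 ω - a} ⊆ {ω | Real.exp (t * a) ≤ Y m ω} := by
      intro ω hω
      simp only [Set.mem_setOf_eq] at hω ⊢
      exact Real.exp_le_exp.2 (by nlinarith)
    have markov := mul_meas_ge_le_integral_of_nonneg
      (ae_of_all μ fun ω => (Real.exp_pos (t * (A 0 ω - A m ω))).le) (intY m le_rfl)
      (Real.exp (t * a))
    have hmono : (μ {ω | A m ω ≤ A 0 ω - a}).toReal ≤ (μ {ω | Real.exp (t * a) ≤ Y m ω}).toReal :=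
      ENNReal.toReal_mono (measure_ne_top μ _) (measure_mono hsubset)
    have hbound : (μ {ω | A m ω ≤ A 0 ω - a}).toReal
        ≤ Real.exp (-(t * a)) * (Real.exp (3 * η * N * t ^ 2 / 4)) ^ m := by
      have h1 : (μ {ω | A m ω ≤ A 0 ω - a}).toReal ≤ (∫ ω, Y m ω ∂μ) / Real.exp (t * a) := by
        rw [le_div_iff₀ (Real.exp_pos _)]
        calc (μ {ω | A m ω ≤ A 0 ω - a}).toReal * Real.exp (t * a)
            ≤ (μ {ω | Real.exp (t * a) ≤ Y m ω}).toReal * Real.exp (t * a) := by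
              exact mul_le_mul_of_nonneg_right hmono (Real.exp_nonneg _)
          _ ≤ ∫ ω, Y m ω ∂μ := by rw [mul_comm]; exact markov
      refine h1.trans ?_
      rw [div_eq_mul_inv, ← Real.exp_neg, mul_comm]
      refine mul_le_mul_of_nonneg_left ?_ (Real.exp_nonneg _)
      exact (key m le_rfl).trans (pow_le_pow_left₀ hα0.le hαle m)
    refine hbound.trans (le_of_eq ?_)
    rw [← Real.exp_nat_mul, ← Real.exp_add]
    congr 1
    rw [ht_def]
    field_simp
    ring
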